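/- Let n ≥ 1. For all A, B, C ∈ O^±(n,n,ℤ), the vector m_{A,B,C}, which a priori lies in (1/2)·ℤ^{2n} ⊂ ℝ^{2n}, has integer entries: m_{A,B,C} ∈ ℤ^{2n}. -/
import Mathlib


open Matrix

/-- Square integer matrices of size `2n`. -/
abbrev Mat (n : ℕ) := Matrix (Fin (n + n)) (Fin (n + n)) ℤ

/-- The `2n × 2n` block matrix `[[A, B], [C, D]]`. -/
def fromB {n : ℕ} (A B C D : Matrix (Fin n) (Fin n) ℤ) : Mat n :=
  Matrix.reindex finSumFinEquiv finSumFinEquiv (Matrix.fromBlocks A B C D)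

/-- The block matrix `I = [[0, Eₙ], [Eₙ, 0]]`. -/
def Imat (n : ℕ) : Mat n := fromB 0 1 1 0

/-- Membership in the integral split pseudo-orthogonal group `O^±(n,n,ℤ)`:
`Aᵀ I A = I` or `Aᵀ I A = -I`. -/
def IsOpm (n : ℕ) (A : Mat n) : Prop :=
  Aᵀ * Imat n * A = Imat n ∨ Aᵀ * Imat n * A = -Imat n

/-- The block matrix `J = [[0, 0], [Eₙ, 0]]`. -/
def Jmat (n : ℕ) : Mat n := fromB 0 0 1 0

/-- The sign `iso(A) ∈ {1, -1}` with `Aᵀ I A = iso(A) • I` (for `A ∈ O^±(n,n,ℤ)`). -/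
noncomputable def iso (n : ℕ) (A : Mat n) : ℤ :=
  if Aᵀ * Imat n * A = Imat n then 1 else -1

/-- For a (skew-symmetric) integer matrix `M`, its strictly lower triangular part
`M_low`, with `(M_low)ᵢⱼ = Mᵢⱼ` for `i > j` and `0` otherwise. -/
def lowm {N : ℕ} (M : Matrix (Fin N) (Fin N) ℤ) : Matrix (Fin N) (Fin N) ℤ :=
  Matrix.of fun i j => if j < i then M i j else 0

/-- The diagonal of a matrix, as a vector `M^{diag}`. -/
def diagv {N : ℕ} (M : Matrix (Fin N) (Fin N) ℤ) : Fin N → ℤ := fun i => M i i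

/-- The skew-symmetric matrix `B_A := iso(A)·J − Aᵀ J A`. -/
noncomputable def Bmat (n : ℕ) (A : Mat n) : Mat n := iso n A • Jmat n - Aᵀ * Jmat n * A

/-- The integer vector `-2·m_{A,B,C}`. -/
noncomputable def mint (n : ℕ) (A B C : Mat n) : Fin (n + n) → ℤ :=
  ((A⁻¹)ᵀ * (B⁻¹)ᵀ * (C⁻¹)ᵀ).mulVec
    (Cᵀ.mulVec (diagv (Bᵀ * lowm (Bmat n A) * B))
      + diagv (Cᵀ * lowm (Bmat n (A * B)) * C)
      - iso n A • diagv (Cᵀ * lowm (Bmat n B) * C)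
      - diagv (Cᵀ * Bᵀ * lowm (Bmat n A) * B * C))

/-- The 3-cocycle
`m_{A,B,C} := −(1/2)·(A⁻¹)ᵀ(B⁻¹)ᵀ(C⁻¹)ᵀ·( Cᵀ·(Bᵀ(B_A)_low B)^{diag} + (Cᵀ(B_{AB})_low C)^{diag}`
`− iso(A)·(Cᵀ(B_B)_low C)^{diag} − (CᵀBᵀ(B_A)_low B C)^{diag} )` as a vector in `ℝ^{2n}`. -/
noncomputable def mvec (n : ℕ) (A B C : Mat n) : Fin (n + n) → ℝ :=
  fun i => -(1 / 2 : ℝ) * (mint n A B C i : ℝ)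

/-! ### Auxiliary development for Statement 13 -/

namespace S13

abbrev R2 := ZMod 2

noncomputable def cI : ℤ →+* R2 := Int.castRingHom (ZMod 2)

/-- strictly lower triangular part, over `ZMod 2` -/
def low2 {N : ℕ} (M : Matrix (Fin N) (Fin N) R2) : Matrix (Fin N) (Fin N) R2 :=
  Matrix.of fun i j => if j < i then M i j else 0

/-- diagonal vector, over `ZMod 2` -/
def dg {N : ℕ} (M : Matrix (Fin N) (Fin N) R2) : Fin N → R2 := fun i => M i i

variable {N : ℕ}

lemma low2_add (M M' : Matrix (Fin N) (Fin N) R2) : low2 (M + M') = low2 M + low2 M' := by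
  ext i j; simp [low2]; split <;> simp

lemma dg_add (M M' : Matrix (Fin N) (Fin N) R2) : dg (M + M') = dg M + dg M' := rfl

lemma dg_conj (Q X : Matrix (Fin N) (Fin N) R2) : dg (Qᵀ * Xᵀ * Q) = dg (Qᵀ * X * Q) := by
  funext i
  have h : Qᵀ * Xᵀ * Q = (Qᵀ * X * Q)ᵀ := by
    simp [Matrix.transpose_mul, mul_assoc]
  rw [h]; rfl

lemma dg_diag (Q : Matrix (Fin N) (Fin N) R2) (d : Fin N → R2) :
    dg (Qᵀ * Matrix.diagonal d * Q) = Qᵀ.mulVec d := by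
  funext i
  have h : ∀ a b : R2, a * b * a = a * b := by decide
  show (Qᵀ * Matrix.diagonal d * Q) i i = _
  rw [Matrix.mul_apply]
  simp only [Matrix.mulVec, dotProduct]
  refine Finset.sum_congr rfl fun j _ => ?_
  rw [Matrix.mul_diagonal, Matrix.transpose_apply, h]

lemma low2_decomp (T : Matrix (Fin N) (Fin N) R2) :
    low2 T + (low2 Tᵀ)ᵀ = T + Matrix.diagonal (dg T) := by
  have h2 : ∀ a : R2, a + a = 0 := by decide
  ext i j
  rcases lt_trichotomy j i with h|h|h
  · simp [low2, Matrix.diagonal_apply, h, (h.ne' : i ≠ j), not_lt_of_gt h]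
  · subst h; simp [low2, Matrix.diagonal_apply, dg, h2]
  · simp [low2, Matrix.diagonal_apply, h, (h.ne : i ≠ j), not_lt_of_gt h]

lemma sym_decomp (S : Matrix (Fin N) (Fin N) R2) (hs : Sᵀ = S) (hd : ∀ i, S i i = 0) :
    S = low2 S + (low2 S)ᵀ := by
  ext i j
  rcases lt_trichotomy j i with h|h|h
  · simp [low2, h, not_lt_of_gt h]
  · subst h; simp [low2, hd]
  · have hss : S i j = S j i := by conv_lhs => rw [← hs, Matrix.transpose_apply]
    simp [low2, h, not_lt_of_gt h, hss]

/-- Key quadratic-refinement identity in characteristic two. -/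
lemma key (S P Q : Matrix (Fin N) (Fin N) R2) (hs : Sᵀ = S) (hd : ∀ i, S i i = 0) :
    dg (Qᵀ * low2 (Pᵀ * S * P) * Q)
      = dg (Qᵀ * (Pᵀ * low2 S * P) * Q) + Qᵀ.mulVec (dg (Pᵀ * low2 S * P)) := by
  set T := Pᵀ * low2 S * P with hT
  have hSP : Pᵀ * S * P = T + Tᵀ := by
    conv_lhs => rw [sym_decomp S hs hd]
    rw [hT]
    simp [Matrix.mul_add, Matrix.add_mul, Matrix.transpose_mul, Matrix.transpose_transpose,
      mul_assoc]
  rw [hSP, low2_add, Matrix.mul_add, Matrix.add_mul, dg_add, ← dg_conj Q (low2 Tᵀ),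
    ← dg_add, ← Matrix.add_mul, ← Matrix.mul_add, low2_decomp,
    Matrix.mul_add, Matrix.add_mul, dg_add, dg_diag]

/-! ### Integer-level facts -/

lemma isoSpec (n : ℕ) (A : Mat n) (hA : IsOpm n A) :
    Aᵀ * Imat n * A = iso n A • Imat n := by
  unfold iso
  split
  · rwa [one_smul]
  · rw [neg_one_smul]
    rcases hA with h | h
    · exact absurd h (by assumption)
    · exact h

lemma JJt (n : ℕ) : Jmat n + (Jmat n)ᵀ = Imat n := by
  unfold Jmat Imat fromB
  ext i j
  simp only [Matrix.add_apply, Matrix.transpose_apply, Matrix.reindex_apply,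
    Matrix.submatrix_apply]
  rcases h1 : finSumFinEquiv.symm i with a|a <;> rcases h2 : finSumFinEquiv.symm j with b|b <;>
    simp [Matrix.fromBlocks, Matrix.one_apply, eq_comm]

lemma Bmat_skew (n : ℕ) (A : Mat n) (hA : IsOpm n A) :
    (Bmat n A)ᵀ = -(Bmat n A) := by
  have h := isoSpec n A hA
  have hI : Jmat n + (Jmat n)ᵀ = Imat n := JJt n
  unfold Bmat
  have hsplit : Aᵀ * Imat n * A = Aᵀ * Jmat n * A + Aᵀ * (Jmat n)ᵀ * A := by
    rw [← hI]; noncomm_ring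
  rw [Matrix.transpose_sub, Matrix.transpose_smul, Matrix.transpose_mul,
    Matrix.transpose_mul, Matrix.transpose_transpose]
  have h2 : Aᵀ * (Jmat n)ᵀ * A = iso n A • Imat n - Aᵀ * Jmat n * A := by
    rw [← h, hsplit]; abel
  rw [← mul_assoc, h2, show (Jmat n)ᵀ = Imat n - Jmat n from by rw [← hI]; abel, smul_sub]
  abel

lemma Bmat_diag (n : ℕ) (A : Mat n) (hA : IsOpm n A) (i : Fin (n + n)) :
    Bmat n A i i = 0 := by
  have h := congrFun (congrFun (Bmat_skew n A hA) i) i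
  simp only [Matrix.transpose_apply, Matrix.neg_apply] at h
  omega

/-! ### Casting to `ZMod 2` -/

lemma map_lowm (M : Matrix (Fin N) (Fin N) ℤ) : (lowm M).map cI = low2 (M.map cI) := by
  ext i j
  simp only [lowm, low2, Matrix.map_apply, Matrix.of_apply]
  split <;> simp

lemma iso_cast (n : ℕ) (X : Mat n) : cI (iso n X) = 1 := by
  unfold iso
  split
  · simp
  · show ((-1 : ℤ) : ZMod 2) = 1
    decide

lemma Bmat_map (n : ℕ) (X : Mat n) :
    (Bmat n X).map cI
      = (Jmat n).map cI + (X.map cI)ᵀ * (Jmat n).map cI * (X.map cI) := by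
  have hx : ∀ a b : R2, a - b = a + b := by decide
  have h1 : (Bmat n X).map cI = (Jmat n).map cI - (Xᵀ * Jmat n * X).map cI := by
    ext i j
    simp only [Bmat, Matrix.map_apply, Matrix.sub_apply, Matrix.smul_apply, smul_eq_mul,
      _root_.map_sub, _root_.map_mul, iso_cast, one_mul]
  rw [h1, _root_.Matrix.map_mul, _root_.Matrix.map_mul, ← Matrix.transpose_map]
  ext i j
  simp only [Matrix.sub_apply, Matrix.add_apply]
  rw [hx]

lemma Bmat_comp (n : ℕ) (A B : Mat n) :
    (Bmat n (A * B)).map cI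
      = (B.map cI)ᵀ * ((Bmat n A).map cI) * (B.map cI) + (Bmat n B).map cI := by
  have hMM : ∀ M : Matrix (Fin (n+n)) (Fin (n+n)) R2, M + M = 0 := by
    intro M; ext i j
    simpa using (by decide : ∀ a : R2, a + a = 0) (M i j)
  rw [Bmat_map, Bmat_map, Bmat_map, _root_.Matrix.map_mul]
  set A' := A.map cI
  set B' := B.map cI
  set J' := (Jmat n).map cI
  have e1 : (A' * B')ᵀ * J' * (A' * B') = B'ᵀ * (A'ᵀ * J' * A') * B' := by
    rw [Matrix.transpose_mul]; noncomm_ring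
  rw [e1, Matrix.mul_add, Matrix.add_mul]
  have h := hMM (B'ᵀ * J' * B')
  abel_nf
  rw [two_smul, h, add_zero]

lemma cast_mulVec (M : Matrix (Fin N) (Fin N) ℤ) (v : Fin N → ℤ) (j : Fin N) :
    cI (M.mulVec v j) = (M.map cI).mulVec (fun k => cI (v k)) j := by
  simp [Matrix.mulVec, dotProduct, map_sum]

lemma cast_d {n : ℕ} (P M : Mat n) :
    (fun k => cI (diagv (Pᵀ * lowm M * P) k))
      = dg ((P.map cI)ᵀ * low2 (M.map cI) * (P.map cI)) := by
  have h : (Pᵀ * lowm M * P).map cI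
      = (P.map cI)ᵀ * low2 (M.map cI) * (P.map cI) := by
    rw [_root_.Matrix.map_mul, _root_.Matrix.map_mul, map_lowm, ← Matrix.transpose_map]
  funext k
  show cI ((Pᵀ * lowm M * P) k k) = _
  rw [show cI ((Pᵀ * lowm M * P) k k) = ((Pᵀ * lowm M * P).map cI) k k from rfl, h]
  rfl

lemma wcast (n : ℕ) (A B C : Mat n) (hA : IsOpm n A) (j : Fin (n + n)) :
    cI ((Cᵀ.mulVec (diagv (Bᵀ * lowm (Bmat n A) * B))
      + diagv (Cᵀ * lowm (Bmat n (A * B)) * C)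
      - iso n A • diagv (Cᵀ * lowm (Bmat n B) * C)
      - diagv (Cᵀ * Bᵀ * lowm (Bmat n A) * B * C)) j) = 0 := by
  set A' := A.map cI with hA'
  set B' := B.map cI with hB'
  set C' := C.map cI with hC'
  set SA := (Bmat n A).map cI with hSA
  set SB := (Bmat n B).map cI with hSB
  have hskew := Bmat_skew n A hA
  have hsym : SAᵀ = SA := by
    ext i k
    have h := congrFun (congrFun hskew i) k
    simp only [Matrix.transpose_apply, Matrix.neg_apply] at h
    show cI (Bmat n A k i) = cI (Bmat n A i k)
    rw [h, _root_.map_neg]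
    exact (by decide : ∀ a : R2, -a = a) _
  have hdiag : ∀ i, SA i i = 0 := by
    intro i
    show cI (Bmat n A i i) = 0
    rw [Bmat_diag n A hA i, map_zero]
  -- reassociate d4 over ℤ
  have hassoc : Cᵀ * Bᵀ * lowm (Bmat n A) * B * C
      = Cᵀ * (Bᵀ * lowm (Bmat n A) * B) * C := by noncomm_ring
  -- cast each piece
  have e1 : (fun k => cI (diagv (Bᵀ * lowm (Bmat n A) * B) k))
      = dg (B'ᵀ * low2 SA * B') := cast_d B (Bmat n A)
  have e2 : cI (diagv (Cᵀ * lowm (Bmat n (A * B)) * C) j)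
      = dg (C'ᵀ * low2 ((Bmat n (A * B)).map cI) * C') j :=
    congrFun (cast_d C (Bmat n (A * B))) j
  have e3 : cI (diagv (Cᵀ * lowm (Bmat n B) * C) j)
      = dg (C'ᵀ * low2 SB * C') j := congrFun (cast_d C (Bmat n B)) j
  have e4 : cI (diagv (Cᵀ * Bᵀ * lowm (Bmat n A) * B * C) j)
      = dg (C'ᵀ * (B'ᵀ * low2 SA * B') * C') j := by
    show cI ((Cᵀ * Bᵀ * lowm (Bmat n A) * B * C) j j) = _
    rw [hassoc]
    rw [show cI ((Cᵀ * (Bᵀ * lowm (Bmat n A) * B) * C) j j)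
        = ((Cᵀ * (Bᵀ * lowm (Bmat n A) * B) * C).map cI) j j from rfl]
    rw [_root_.Matrix.map_mul, _root_.Matrix.map_mul, _root_.Matrix.map_mul,
      _root_.Matrix.map_mul, map_lowm, ← Matrix.transpose_map, ← Matrix.transpose_map]
    rfl
  rw [Pi.sub_apply, Pi.sub_apply, Pi.add_apply, _root_.map_sub, _root_.map_sub,
    _root_.map_add, Pi.smul_apply, smul_eq_mul, _root_.map_mul, iso_cast, one_mul]
  rw [cast_mulVec, e2, e3, e4]
  rw [show (Cᵀ).map cI = C'ᵀ from by rw [← Matrix.transpose_map]]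
  rw [show (fun k => cI ((diagv (Bᵀ * lowm (Bmat n A) * B)) k))
      = dg (B'ᵀ * low2 SA * B') from e1]
  rw [Bmat_comp n A B, ← hSA, ← hSB, ← hB', low2_add, Matrix.mul_add, Matrix.add_mul,
    dg_add, Pi.add_apply, key SA B' C' hsym hdiag, Pi.add_apply]
  have h2 : ∀ t : R2, t + t = 0 := by decide
  linear_combination h2 (C'ᵀ.mulVec (dg (B'ᵀ * low2 SA * B')) j)

end S13

/-- For all `A, B, C ∈ O^±(n,n,ℤ)`, the vector `m_{A,B,C}`, a priori in
`(1/2)·ℤ^{2n} ⊂ ℝ^{2n}`, has integer entries: `m_{A,B,C} ∈ ℤ^{2n}`. -/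
theorem statement13 (n : ℕ) (hn : 1 ≤ n) (A B C : Mat n)
    (hA : IsOpm n A) (hB : IsOpm n B) (hC : IsOpm n C) :
    ∃ v : Fin (n + n) → ℤ, ∀ i, mvec n A B C i = (v i : ℝ) := by
  have hdvd : ∀ i, (2 : ℤ) ∣ mint n A B C i := by
    intro i
    have hcast : S13.cI (mint n A B C i) = 0 := by
      rw [mint]
      simp only [Matrix.mulVec, dotProduct, map_sum, _root_.map_mul]
      refine Finset.sum_eq_zero fun j _ => ?_
      rw [S13.wcast n A B C hA j, mul_zero]
    exact (ZMod.intCast_zmod_eq_zero_iff_dvd _ 2).mp hcast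
  refine ⟨fun i => -(mint n A B C i / 2), fun i => ?_⟩
  obtain ⟨k, hk⟩ := hdvd i
  rw [mvec]
  simp only [hk]
  rw [Int.mul_ediv_cancel_left k (by norm_num)]
  push_cast
  ring
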